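/- arXiv:1104.1555 — 3 statements merged into one kernel-verified Lean document; each statement's English description precedes it below -/
import Mathlib

section
/- For n = 0,1,2,…, let ℱ_n be an increasing sequence of σ-fields and X_n random variables, measurable with respect to ℱ_n, that are identically distributed with E(|X_0| log⁺|X_0|) < ∞. Let g_n be quantizing functions with |g_n(X_n) − X_n| ≤ 1 for all n, let 𝒢_n ⊆ ℱ_n be an increasing sequence of sub-σ-fields such that Y_n = g_n(X_n) is 𝒢_n-measurable, and set Z_n = Y_n − E(Y_n | 𝒢_{n−1}). Then (1/n) Σ_{i=1}^{n} Z_i → 0 almost surely as n → ∞. -/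
open MeasureTheory Filter Finset
open scoped ENNReal



theorem mw_sum_Icc_one {M : Type*} [AddCommMonoid M] (f : ℕ → M) (n : ℕ) :
    ∑ i ∈ Finset.Icc 1 n, f i = ∑ j ∈ Finset.range n, f (j + 1) := by
  rw [← Finset.Ico_add_one_right_eq_Icc, Finset.sum_Ico_eq_sum_range]
  simp [add_comm 1]

/-- Kronecker's lemma. -/
theorem mw_kronecker {a : ℕ → ℝ} {l : ℝ}
    (h : Tendsto (fun n : ℕ => ∑ i ∈ Finset.Icc 1 n, a i / i) atTop (nhds l)) :
    Tendsto (fun n : ℕ => (1 / (n : ℝ)) * ∑ i ∈ Finset.Icc 1 n, a i) atTop (nhds 0) := by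
  set s : ℕ → ℝ := fun n => ∑ i ∈ Finset.Icc 1 n, a i / i with hs
  have hs0 : s 0 = 0 := by simp [hs]
  have hsucc : ∀ n : ℕ, s (n + 1) = s n + a (n + 1) / (n + 1) := by
    intro n
    simp only [hs, mw_sum_Icc_one (fun i => a i / i), Finset.sum_range_succ]
    push_cast; ring
  have key : ∀ n : ℕ, ∑ i ∈ Finset.Icc 1 n, a i = n * s n - ∑ i ∈ Finset.range n, s i := by
    intro n
    induction n with
    | zero => simp
    | succ n ih =>
      rw [mw_sum_Icc_one, Finset.sum_range_succ, ← mw_sum_Icc_one a n, ih,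
        Finset.sum_range_succ, hsucc]
      have hn1 : ((n : ℝ) + 1) ≠ 0 := by positivity
      push_cast
      field_simp
      ring
  have hces : Tendsto (fun n : ℕ => (n : ℝ)⁻¹ * ∑ i ∈ Finset.range n, s i) atTop (nhds l) :=
    h.cesaro
  have := (h.sub hces)
  rw [sub_self] at this
  apply this.congr'
  filter_upwards [Ici_mem_atTop 1] with n hn
  have hn0 : (n : ℝ) ≠ 0 := by
    have : (0:ℕ) < n := hn
    positivity
  rw [key n]
  field_simp

theorem mw_kronecker_nonneg {b : ℕ → ℝ}
    (hsum : Summable (fun j : ℕ => b (j + 1) / (j + 1))) :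
    Tendsto (fun n : ℕ => (1 / (n : ℝ)) * ∑ i ∈ Finset.Icc 1 n, b i) atTop (nhds 0) := by
  apply mw_kronecker (l := ∑' j : ℕ, b (j + 1) / (j + 1))
  have h := hsum.hasSum.tendsto_sum_nat
  apply h.congr
  intro n
  rw [mw_sum_Icc_one (fun i => b i / i)]
  push_cast
  rfl



theorem mw_ae_summable {Ω : Type*} [MeasurableSpace Ω] (μ : Measure Ω)
    (f : ℕ → Ω → ℝ) (hnn : ∀ j ω, 0 ≤ f j ω)
    (hint : ∀ j, Integrable (f j) μ) (hsum : Summable fun j => ∫ ω, f j ω ∂μ) :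
    ∀ᵐ ω ∂μ, Summable fun j => f j ω := by
  have hmeas : ∀ j, AEMeasurable (fun ω => ENNReal.ofReal (f j ω)) μ := fun j =>
    ENNReal.measurable_ofReal.comp_aemeasurable (hint j).aestronglyMeasurable.aemeasurable
  have hlt : ∫⁻ ω, ∑' j, ENNReal.ofReal (f j ω) ∂μ < ∞ := by
    rw [lintegral_tsum hmeas]
    have heq : ∀ j, ∫⁻ ω, ENNReal.ofReal (f j ω) ∂μ = ENNReal.ofReal (∫ ω, f j ω ∂μ) := by
      intro j
      rw [ofReal_integral_eq_lintegral_ofReal (hint j) (Filter.Eventually.of_forall (hnn j))]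
    simp_rw [heq]
    rw [← ENNReal.ofReal_tsum_of_nonneg (fun j => integral_nonneg (hnn j)) hsum]
    exact ENNReal.ofReal_lt_top
  filter_upwards [ae_lt_top' (AEMeasurable.ennreal_tsum hmeas) hlt.ne] with ω hω
  have := ENNReal.summable_toReal hω.ne
  apply this.congr
  intro j
  rw [ENNReal.toReal_ofReal (hnn j ω)]

theorem mw_harmonic_bound (v : ℝ) (hv : 0 ≤ v) (N : ℕ) :
    ∑ j ∈ Finset.range N, ((j : ℝ) + 1)⁻¹ * (if (j : ℝ) < v then v + 1 else 0)
      ≤ (v + 1) * (1 + Real.log (v + 1)) := by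
  have h1 : ∑ j ∈ Finset.range N, ((j : ℝ) + 1)⁻¹ * (if (j : ℝ) < v then v + 1 else 0)
      = ∑ j ∈ (Finset.range N).filter (fun j : ℕ => (j : ℝ) < v), ((j : ℝ) + 1)⁻¹ * (v + 1) := by
    rw [Finset.sum_filter]
    apply Finset.sum_congr rfl
    intro j _
    by_cases h : (j : ℝ) < v <;> simp [h]
  rw [h1]
  have hsub : (Finset.range N).filter (fun j : ℕ => (j : ℝ) < v) ⊆ Finset.range (⌊v⌋₊ + 1) := by
    intro j hj
    simp only [Finset.mem_filter, Finset.mem_range] at *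
    exact Nat.lt_succ_of_le (Nat.le_floor hj.2.le)
  calc ∑ j ∈ (Finset.range N).filter (fun j : ℕ => (j : ℝ) < v), ((j : ℝ) + 1)⁻¹ * (v + 1)
      ≤ ∑ j ∈ Finset.range (⌊v⌋₊ + 1), ((j : ℝ) + 1)⁻¹ * (v + 1) := by
        apply Finset.sum_le_sum_of_subset_of_nonneg hsub
        intro j _ _
        positivity
    _ = (harmonic (⌊v⌋₊ + 1) : ℝ) * (v + 1) := by
        rw [← Finset.sum_mul]
        congr 1
        rw [harmonic_eq_sum_Icc]
        push_cast
        rw [mw_sum_Icc_one (fun i : ℕ => ((i : ℝ))⁻¹)]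
        push_cast
        rfl
    _ ≤ (1 + Real.log (v + 1)) * (v + 1) := by
        apply mul_le_mul_of_nonneg_right _ (by linarith)
        have h2 : ⌊v⌋₊ + 1 = ⌊v + 1⌋₊ := (Nat.floor_add_one hv).symm
        rw [h2]
        exact_mod_cast harmonic_floor_le_one_add_log (v + 1) (by linarith)
    _ = (v + 1) * (1 + Real.log (v + 1)) := mul_comm _ _

theorem mw_sq_bound (v : ℝ) (hv : 0 ≤ v) (n : ℕ) :
    ∑ i ∈ Finset.Icc 1 n, (((i : ℝ)) ^ 2)⁻¹ * (if v ≤ (i : ℝ) + 1 then (v + 1) ^ 2 else 0)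
      ≤ 32 * (v + 1) := by
  have h1 : ∑ i ∈ Finset.Icc 1 n, (((i : ℝ)) ^ 2)⁻¹ * (if v ≤ (i : ℝ) + 1 then (v + 1) ^ 2 else 0)
      = (∑ i ∈ (Finset.Icc 1 n).filter (fun i : ℕ => v ≤ (i : ℝ) + 1), (((i : ℝ)) ^ 2)⁻¹)
          * (v + 1) ^ 2 := by
    rw [Finset.sum_mul, Finset.sum_filter]
    apply Finset.sum_congr rfl
    intro i _
    by_cases h : v ≤ (i : ℝ) + 1 <;> simp [h]
  rw [h1]
  have hall : (∑ i ∈ (Finset.Icc 1 n).filter (fun i : ℕ => v ≤ (i : ℝ) + 1),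
      (((i : ℝ)) ^ 2)⁻¹) ≤ 2 := by
    calc (∑ i ∈ (Finset.Icc 1 n).filter (fun i : ℕ => v ≤ (i : ℝ) + 1), (((i : ℝ)) ^ 2)⁻¹)
        ≤ ∑ i ∈ Finset.Ioo 0 (n+1), (((i : ℝ)) ^ 2)⁻¹ := by
          apply Finset.sum_le_sum_of_subset_of_nonneg
          · intro i hi
            simp only [Finset.mem_filter, Finset.mem_Icc, Finset.mem_Ioo] at *
            omega
          · intro i _ _; positivity
      _ ≤ 2 := by simpa using sum_Ioo_inv_sq_le (α := ℝ) 0 (n+1)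
  by_cases hv3 : v ≤ 3
  · calc (∑ i ∈ (Finset.Icc 1 n).filter (fun i : ℕ => v ≤ (i : ℝ) + 1), (((i : ℝ)) ^ 2)⁻¹)
          * (v+1)^2
        ≤ 2 * (v+1)^2 := mul_le_mul_of_nonneg_right hall (by positivity)
      _ ≤ 32 * (v+1) := by nlinarith
  · push_neg at hv3
    have hceil : 2 < ⌈v⌉₊ := by
      have : ((2:ℕ) : ℝ) < v := by push_cast; linarith
      exact Nat.lt_ceil.mpr this
    set k : ℕ := ⌈v⌉₊ - 2 with hkdef
    have hk1 : 1 ≤ k := by omega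
    have hkv : v - 2 ≤ (k : ℝ) := by
      have h2 : v ≤ (⌈v⌉₊ : ℝ) := Nat.le_ceil v
      have h3 : ((k : ℕ) : ℝ) = (⌈v⌉₊ : ℝ) - 2 := by
        rw [hkdef, Nat.cast_sub (by omega)]
        norm_num
      linarith
    have hku : (k : ℝ) ≤ v - 1 := by
      have h2 : (⌈v⌉₊ : ℝ) < v + 1 := Nat.ceil_lt_add_one hv
      have h3 : ((k : ℕ) : ℝ) = (⌈v⌉₊ : ℝ) - 2 := by
        rw [hkdef, Nat.cast_sub (by omega)]
        norm_num
      linarith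
    have hsub : (Finset.Icc 1 n).filter (fun i : ℕ => v ≤ (i : ℝ) + 1)
        ⊆ Finset.Ioo (k-1) (n+1) := by
      intro i hi
      simp only [Finset.mem_filter, Finset.mem_Icc] at hi
      obtain ⟨⟨hi1, hi2⟩, hiv⟩ := hi
      refine Finset.mem_Ioo.mpr ⟨?_, by omega⟩
      have hik : (k:ℝ) ≤ (i:ℝ) := by linarith
      have hik' : k ≤ i := by exact_mod_cast hik
      omega
    calc (∑ i ∈ (Finset.Icc 1 n).filter (fun i : ℕ => v ≤ (i : ℝ) + 1), (((i : ℝ)) ^ 2)⁻¹)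
          * (v+1)^2
        ≤ (∑ i ∈ Finset.Ioo (k-1) (n+1), (((i : ℝ)) ^ 2)⁻¹) * (v+1)^2 :=
          mul_le_mul_of_nonneg_right
            (Finset.sum_le_sum_of_subset_of_nonneg hsub (fun i _ _ => by positivity))
            (by positivity)
      _ ≤ (2 / (k:ℝ)) * (v+1)^2 := by
          apply mul_le_mul_of_nonneg_right _ (by positivity)
          have h5 := sum_Ioo_inv_sq_le (α := ℝ) (k-1) (n+1)
          have hcast : ((k - 1 : ℕ) : ℝ) + 1 = (k : ℝ) := by
            rw [Nat.cast_sub hk1]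
            norm_num
          rw [hcast] at h5
          exact h5
      _ ≤ 32 * (v + 1) := by
          have hkpos : (0:ℝ) < (k:ℝ) := by exact_mod_cast hk1
          rw [div_mul_eq_mul_div, div_le_iff₀ hkpos]
          nlinarith

theorem mw_trunc_meas {Ω : Type*} [MeasurableSpace Ω] {f : Ω → ℝ} (hf : Measurable f) (c : ℝ) :
    Measurable fun ω => if |f ω| ≤ c then f ω else 0 :=
  Measurable.ite (measurableSet_le hf.abs measurable_const) hf measurable_const

/-- **Morvai–Weiss, Proposition 1, (6)** (a generalization of a result of Elton): for
identically distributed `X_n ∈ L log⁺ L` adapted to `ℱ_n`, quantized versions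
`Y_n = g_n(X_n)` (with `|Y_n − X_n| ≤ 1`) measurable with respect to sub-σ-fields
`𝒢_n ⊆ ℱ_n`, the martingale differences `Z_n = Y_n − E(Y_n | 𝒢_{n-1})` satisfy
`(1/n) ∑_{i=1}^n Z_i → 0` almost surely. -/
theorem avg_tendsto_zero_of_quantized_martingale_differences
    {Ω : Type*} [m0 : MeasurableSpace Ω] (μ : Measure Ω) [IsProbabilityMeasure μ]
    (F : ℕ → MeasurableSpace Ω) (hFmono : Monotone F) (hFle : ∀ n, F n ≤ m0)
    (X : ℕ → Ω → ℝ) (hXmeas : ∀ n, Measurable[F n] (X n))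
    (hid : ∀ n, μ.map (X n) = μ.map (X 0))
    (hLlogL : Integrable (fun ω => |X 0 ω| * max (Real.log |X 0 ω|) 0) μ)
    (G : ℕ → MeasurableSpace Ω) (hGmono : Monotone G) (hGF : ∀ n, G n ≤ F n)
    (g : ℕ → ℝ → ℝ) (hquant : ∀ n ω, |g n (X n ω) - X n ω| ≤ 1)
    (hYmeas : ∀ n, Measurable[G n] fun ω => g n (X n ω))
    (Z : ℕ → Ω → ℝ)
    (hZ : ∀ n, 1 ≤ n →
      Z n = fun ω => g n (X n ω) - condExp (G (n - 1)) μ (fun ω' => g n (X n ω')) ω) :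
    ∀ᵐ ω ∂μ, Tendsto (fun n : ℕ => (1 / (n : ℝ)) * ∑ i ∈ Finset.Icc 1 n, Z i ω)
      atTop (nhds 0) := by
  classical
  have hGm0 : ∀ n, G n ≤ m0 := fun n => (hGF n).trans (hFle n)
  have hXm : ∀ n, Measurable (X n) := fun n => (hXmeas n).mono (hFle n) le_rfl
  set Y : ℕ → Ω → ℝ := fun n ω => g n (X n ω) with hYdef
  have hYm : ∀ n, Measurable (Y n) := fun n => (hYmeas n).mono (hGm0 n) le_rfl
  -- X 0 is integrable
  have hX0int : Integrable (X 0) μ := by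
    apply Integrable.mono' ((integrable_const (Real.exp 1)).add hLlogL)
      (hXm 0).aestronglyMeasurable
    apply Filter.Eventually.of_forall
    intro ω
    simp only [Pi.add_apply, Real.norm_eq_abs]
    rcases le_or_gt |X 0 ω| (Real.exp 1) with h | h
    · have : 0 ≤ |X 0 ω| * max (Real.log |X 0 ω|) 0 :=
        mul_nonneg (abs_nonneg _) (le_max_right _ _)
      linarith
    · have h1 : (1:ℝ) ≤ Real.log |X 0 ω| := by
        rw [Real.le_log_iff_exp_le (lt_trans (Real.exp_pos 1) h)]
        exact h.le
      have h2 : |X 0 ω| * 1 ≤ |X 0 ω| * max (Real.log |X 0 ω|) 0 :=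
        mul_le_mul_of_nonneg_left (le_trans h1 (le_max_left _ _)) (abs_nonneg _)
      have := Real.exp_pos 1
      nlinarith
  have hXint : ∀ n, Integrable (X n) μ := by
    intro n
    have h1 : Integrable (id : ℝ → ℝ) (μ.map (X n)) := by
      rw [hid n, integrable_map_measure aestronglyMeasurable_id (hXm 0).aemeasurable]
      exact hX0int
    have h2 := (integrable_map_measure aestronglyMeasurable_id (hXm n).aemeasurable).mp h1
    simpa using h2
  have hYabs : ∀ n ω, |Y n ω| ≤ |X n ω| + 1 := by
    intro n ω
    have h1 := hquant n ω
    have h2 : |Y n ω| - |X n ω| ≤ |Y n ω - X n ω| := by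
      exact abs_sub_abs_le_abs_sub _ _
    simp only [hYdef] at *
    linarith
  have hYint : ∀ n, Integrable (Y n) μ := by
    intro n
    apply Integrable.mono' ((hXint n).abs.add (integrable_const 1))
      (hYm n).aestronglyMeasurable
    apply Filter.Eventually.of_forall
    intro ω
    simp only [Pi.add_apply, Real.norm_eq_abs, Pi.abs_apply]
    exact hYabs n ω
  -- truncation
  set Y' : ℕ → Ω → ℝ := fun i ω => if |Y i ω| ≤ (i:ℝ) then Y i ω else 0 with hY'def
  have hY'smG : ∀ i, StronglyMeasurable[G i] (Y' i) := by
    intro i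
    exact (@mw_trunc_meas Ω (G i) (Y i) (hYmeas i) ((i:ℝ))).stronglyMeasurable
  have hY'm : ∀ i, Measurable (Y' i) := fun i => ((hY'smG i).mono (hGm0 i)).measurable
  have hY'bd : ∀ i ω, |Y' i ω| ≤ (i:ℝ) := by
    intro i ω
    simp only [hY'def]
    split_ifs with h
    · exact h
    · simp
  have hY'int : ∀ i, Integrable (Y' i) μ := by
    intro i
    apply Integrable.mono' (integrable_const ((i:ℝ))) (hY'm i).aestronglyMeasurable
    exact Filter.Eventually.of_forall fun ω => by
      simp only [Real.norm_eq_abs]; exact hY'bd i ω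
  set cY : ℕ → Ω → ℝ := fun i => condExp (G (i-1)) μ (Y' i) with hcYdef
  have hcYsm : ∀ i, StronglyMeasurable[G (i-1)] (cY i) := fun i => stronglyMeasurable_condExp
  have hcYint : ∀ i, Integrable (cY i) μ := fun i => integrable_condExp
  have hcYbd : ∀ i, ∀ᵐ ω ∂μ, |cY i ω| ≤ (i:ℝ) := by
    intro i
    have hup := condExp_mono (m := G (i-1)) (μ := μ) (hY'int i) (integrable_const ((i:ℝ)))
      (Filter.Eventually.of_forall fun ω => (abs_le.mp (hY'bd i ω)).2)
    have hlo := condExp_mono (m := G (i-1)) (μ := μ) (integrable_const (-(i:ℝ))) (hY'int i)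
      (Filter.Eventually.of_forall fun ω => (abs_le.mp (hY'bd i ω)).1)
    have hc1 := condExp_const (hGm0 (i-1)) ((i:ℝ)) (μ := μ)
    have hc2 := condExp_const (hGm0 (i-1)) (-(i:ℝ)) (μ := μ)
    rw [hc1] at hup
    rw [hc2] at hlo
    filter_upwards [hup, hlo] with ω h1 h2
    exact abs_le.mpr ⟨h2, h1⟩
  set Z' : ℕ → Ω → ℝ := fun i ω => Y' i ω - cY i ω with hZ'def
  have hZ'smG : ∀ i, StronglyMeasurable[G i] (Z' i) := fun i =>
    (hY'smG i).sub ((hcYsm i).mono (hGmono (Nat.sub_le i 1)))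
  have hZ'int : ∀ i, Integrable (Z' i) μ := fun i => (hY'int i).sub (hcYint i)
  set T : ℕ → Ω → ℝ := fun i ω => Y i ω - Y' i ω with hTdef
  have hTint : ∀ i, Integrable (T i) μ := fun i => (hYint i).sub (hY'int i)
  set D : ℕ → Ω → ℝ := fun i ω => condExp (G (i-1)) μ (Y i) ω - cY i ω with hDdef
  have hDint : ∀ i, Integrable (D i) μ := fun i => integrable_condExp.sub (hcYint i)
  have hdecomp : ∀ i, 1 ≤ i → ∀ ω, Z i ω = Z' i ω + T i ω - D i ω := by
    intro i hi ω
    rw [hZ i hi]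
    simp only [hZ'def, hTdef, hDdef, hcYdef, hYdef]
    ring
  -- dominating function
  set h : ℕ → ℝ → ℝ := fun i x => if (i:ℝ) - 1 < |x| then |x| + 1 else 0 with hhdef
  have hhm : ∀ i, Measurable (h i) := by
    intro i
    exact Measurable.ite (measurableSet_lt measurable_const measurable_abs)
      (measurable_abs.add measurable_const) measurable_const
  have hhnn : ∀ i x, 0 ≤ h i x := by
    intro i x
    simp only [hhdef]
    split_ifs
    · positivity
    · exact le_refl 0
  have hHint : ∀ i n, Integrable (fun ω => h i (X n ω)) μ := by
    intro i n
    apply Integrable.mono' ((hXint n).abs.add (integrable_const 1))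
      ((hhm i).comp (hXm n)).aestronglyMeasurable
    apply Filter.Eventually.of_forall
    intro ω
    simp only [Function.comp_apply, Pi.add_apply, Real.norm_eq_abs, Pi.abs_apply]
    rw [abs_of_nonneg (hhnn i (X n ω))]
    simp only [hhdef]
    split_ifs
    · exact le_refl _
    · positivity
  have htransfer : ∀ i n, ∫ ω, h i (X n ω) ∂μ = ∫ ω, h i (X 0 ω) ∂μ := by
    intro i n
    rw [← integral_map (hXm n).aemeasurable ((hhm i).aestronglyMeasurable), hid n,
        integral_map (hXm 0).aemeasurable ((hhm i).aestronglyMeasurable)]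
  have hTbd : ∀ i ω, |T i ω| ≤ h i (X i ω) := by
    intro i ω
    have hY1 := hYabs i ω
    by_cases h1 : |Y i ω| ≤ (i:ℝ)
    · have hT : T i ω = 0 := by simp [hTdef, hY'def, h1]
      rw [hT, abs_zero]
      exact hhnn i (X i ω)
    · have hT : T i ω = Y i ω := by simp [hTdef, hY'def, h1]
      rw [hT]
      push_neg at h1
      have hcond : (i:ℝ) - 1 < |X i ω| := by linarith
      simp only [hhdef]
      rw [if_pos hcond]
      linarith
  have hITle : ∀ i, ∫ ω, |T i ω| ∂μ ≤ ∫ ω, h i (X 0 ω) ∂μ := by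
    intro i
    rw [← htransfer i i]
    exact integral_mono (hTint i).abs (hHint i i) (fun ω => hTbd i ω)
  have hDcond : ∀ i, D i =ᵐ[μ] condExp (G (i-1)) μ (T i) := by
    intro i
    have h0 : T i = Y i - Y' i := rfl
    rw [h0]
    filter_upwards [condExp_sub (m := G (i-1)) (μ := μ) (hYint i) (hY'int i)] with ω hω
    simp only [hDdef, hcYdef]
    rw [hω]
    simp [Pi.sub_apply]
  have hIDle : ∀ i, ∫ ω, |D i ω| ∂μ ≤ ∫ ω, |T i ω| ∂μ := by
    intro i
    have h1 : ∫ ω, |D i ω| ∂μ = ∫ ω, |(condExp (G (i-1)) μ (T i)) ω| ∂μ := by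
      apply integral_congr_ae
      filter_upwards [hDcond i] with ω hω
      rw [hω]
    rw [h1]
    exact integral_abs_condExp_le _
  -- the L log L dominating function
  set φ : Ω → ℝ := fun ω => (|X 0 ω| + 1) * (1 + Real.log (|X 0 ω| + 1)) with hφdef
  have hlog1 : ∀ t : ℝ, 0 ≤ t → 0 ≤ Real.log (t + 1) := by
    intro t ht
    apply Real.log_nonneg
    linarith
  have hφnn : ∀ ω, 0 ≤ φ ω := by
    intro ω
    have := hlog1 |X 0 ω| (abs_nonneg _)
    simp only [hφdef]
    have h1 : (0:ℝ) ≤ |X 0 ω| + 1 := by positivity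
    nlinarith
  have hφint : Integrable φ μ := by
    have hmeas : AEStronglyMeasurable φ μ := by
      apply Measurable.aestronglyMeasurable
      exact ((hXm 0).abs.add measurable_const).mul
        (measurable_const.add (Real.measurable_log.comp ((hXm 0).abs.add measurable_const)))
    apply Integrable.mono'
      (g := fun ω => (1 + Real.log 2) * (|X 0 ω| + 1) + |X 0 ω| * max (Real.log |X 0 ω|) 0
        + |X 0 ω|)
      ((((hXint 0).abs.add (integrable_const 1)).const_mul _).add hLlogL |>.add (hXint 0).abs)
      hmeas
    apply Filter.Eventually.of_forall
    intro ω
    rw [Real.norm_eq_abs, abs_of_nonneg (hφnn ω)]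
    simp only [hφdef]
    set t : ℝ := |X 0 ω| with htdef
    have ht : 0 ≤ t := abs_nonneg _
    have hmaxlog : max (Real.log t) 0 ≤ t := by
      rcases eq_or_lt_of_le ht with h | h
      · simp [← h]
      · have := Real.log_le_sub_one_of_pos h
        rw [max_le_iff]
        constructor <;> linarith
    have hlogle : Real.log (t + 1) ≤ Real.log 2 + max (Real.log t) 0 := by
      have h1 : t + 1 ≤ 2 * max t 1 := by
        rcases le_or_gt t 1 with h | h
        · rw [max_eq_right h]; linarith
        · rw [max_eq_left h.le]; linarith
      have h2 : Real.log (t + 1) ≤ Real.log (2 * max t 1) :=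
        Real.log_le_log (by linarith) h1
      rw [Real.log_mul (by norm_num) (by positivity)] at h2
      have h3 : Real.log (max t 1) = max (Real.log t) 0 := by
        rcases le_or_gt t 1 with h | h
        · rw [max_eq_right h, Real.log_one, max_eq_right]
          exact Real.log_nonpos ht h
        · rw [max_eq_left h.le, max_eq_left (Real.log_nonneg h.le)]
      rw [h3] at h2
      exact h2
    have hll : t * max (Real.log t) 0 ≤ t * max (Real.log t) 0 := le_refl _
    nlinarith [mul_nonneg ht (le_max_right (Real.log t) (0:ℝ))]
  -- summability of the tail/drift series
  have hheq : ∀ (j : ℕ) (x : ℝ),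
      h (j+1) x = if (j:ℝ) < |x| then |x| + 1 else 0 := by
    intro j x
    simp only [hhdef]
    apply if_congr _ rfl rfl
    constructor <;> intro hc <;> push_cast at * <;> linarith
  have hstep : ∀ j : ℕ, ∫ ω, (|T (j+1) ω| + |D (j+1) ω|) / ((j:ℝ)+1) ∂μ
      ≤ 2 * (((j:ℝ)+1)⁻¹ * ∫ ω, h (j+1) (X 0 ω) ∂μ) := by
    intro j
    rw [integral_div]
    rw [integral_add (hTint (j+1)).abs (hDint (j+1)).abs]
    have h1 := hITle (j+1)
    have h2 := (hIDle (j+1)).trans (hITle (j+1))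
    rw [div_eq_inv_mul]
    have hpos : (0:ℝ) ≤ ((j:ℝ)+1)⁻¹ := by positivity
    have := mul_le_mul_of_nonneg_left (add_le_add h1 h2) hpos
    calc ((j:ℝ)+1)⁻¹ * ((∫ ω, |T (j+1) ω| ∂μ) + ∫ ω, |D (j+1) ω| ∂μ)
        ≤ ((j:ℝ)+1)⁻¹ * ((∫ ω, h (j+1) (X 0 ω) ∂μ) + ∫ ω, h (j+1) (X 0 ω) ∂μ) := this
      _ = 2 * (((j:ℝ)+1)⁻¹ * ∫ ω, h (j+1) (X 0 ω) ∂μ) := by ring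
  have hsumI : Summable (fun j : ℕ => ∫ ω, (|T (j+1) ω| + |D (j+1) ω|) / ((j:ℝ)+1) ∂μ) := by
    apply summable_of_sum_range_le (c := 2 * ∫ ω, φ ω ∂μ)
    · intro n
      apply integral_nonneg
      intro ω
      positivity
    · intro N
      calc ∑ j ∈ Finset.range N, ∫ ω, (|T (j+1) ω| + |D (j+1) ω|) / ((j:ℝ)+1) ∂μ
          ≤ ∑ j ∈ Finset.range N, 2 * (((j:ℝ)+1)⁻¹ * ∫ ω, h (j+1) (X 0 ω) ∂μ) :=
            Finset.sum_le_sum (fun j _ => hstep j)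
        _ = 2 * ∫ ω, ∑ j ∈ Finset.range N, ((j:ℝ)+1)⁻¹ * h (j+1) (X 0 ω) ∂μ := by
            rw [integral_finset_sum _ (fun j _ => ((hHint (j+1) 0).const_mul _))]
            rw [← Finset.mul_sum]
            congr 1
            apply Finset.sum_congr rfl
            intro j _
            rw [integral_const_mul]
        _ ≤ 2 * ∫ ω, φ ω ∂μ := by
            apply mul_le_mul_of_nonneg_left _ (by norm_num)
            apply integral_mono
              (integrable_finset_sum _ (fun j _ => ((hHint (j+1) 0).const_mul _))) hφint
            intro ω
            have := mw_harmonic_bound |X 0 ω| (abs_nonneg _) N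
            simp only [hφdef]
            calc ∑ j ∈ Finset.range N, ((j:ℝ)+1)⁻¹ * h (j+1) (X 0 ω)
                = ∑ j ∈ Finset.range N, ((j:ℝ)+1)⁻¹ *
                    (if (j:ℝ) < |X 0 ω| then |X 0 ω| + 1 else 0) := by
                  apply Finset.sum_congr rfl
                  intro j _
                  rw [hheq j (X 0 ω)]
              _ ≤ (|X 0 ω| + 1) * (1 + Real.log (|X 0 ω| + 1)) := this
  have haeS : ∀ᵐ ω ∂μ, Summable fun j : ℕ => (|T (j+1) ω| + |D (j+1) ω|) / ((j:ℝ)+1) := by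
    exact mw_ae_summable μ (fun j ω => (|T (j+1) ω| + |D (j+1) ω|) / ((j:ℝ)+1))
      (fun j ω => div_nonneg (add_nonneg (abs_nonneg _) (abs_nonneg _)) (by positivity))
      (fun j => ((hTint (j+1)).abs.add (hDint (j+1)).abs).div_const _) hsumI
  -- Part A : truncated, centered martingale
  set 𝒢 : Filtration ℕ m0 := ⟨G, hGmono, hGm0⟩ with h𝒢def
  set ζ : ℕ → Ω → ℝ := fun i ω => ((i:ℝ))⁻¹ * Z' i ω with hζdef
  have hζsmG : ∀ i, StronglyMeasurable[G i] (ζ i) := fun i =>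
    stronglyMeasurable_const.mul (hZ'smG i)
  have hζm : ∀ i, Measurable (ζ i) := fun i => ((hζsmG i).mono (hGm0 i)).measurable
  have hζint : ∀ i, Integrable (ζ i) μ := fun i => (hZ'int i).const_mul _
  have hζbd : ∀ i, ∀ᵐ ω ∂μ, |ζ i ω| ≤ 2 := by
    intro i
    rcases Nat.eq_zero_or_pos i with h0 | hpos
    · subst h0
      apply Filter.Eventually.of_forall
      intro ω
      simp [hζdef]
    · filter_upwards [hcYbd i] with ω h1
      simp only [hζdef]
      rw [abs_mul]
      have h2 : |Z' i ω| ≤ 2 * i := by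
        have h3 := hY'bd i ω
        have h4 := abs_sub (Y' i ω) (cY i ω)
        simp only [hZ'def]
        linarith
      have hipos : (0:ℝ) < (i:ℝ) := by exact_mod_cast hpos
      rw [abs_inv, abs_of_nonneg hipos.le]
      calc (i:ℝ)⁻¹ * |Z' i ω| ≤ (i:ℝ)⁻¹ * (2 * i) :=
            mul_le_mul_of_nonneg_left h2 (by positivity)
        _ = 2 := by field_simp
  have hcondζ : ∀ i, condExp (G (i-1)) μ (ζ i) =ᵐ[μ] 0 := by
    intro i
    have h1 : ζ i = ((i:ℝ))⁻¹ • (Y' i - cY i) := by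
      funext ω
      simp [hζdef, hZ'def, smul_eq_mul]
    rw [h1]
    refine (condExp_smul (m := G (i-1)) (μ := μ) ((i:ℝ)⁻¹) (Y' i - cY i)).trans ?_
    have h4 := condExp_sub (m := G (i-1)) (μ := μ) (hY'int i) (hcYint i)
    have h5 : condExp (G (i-1)) μ (cY i) = cY i :=
      condExp_of_stronglyMeasurable (hGm0 (i-1)) (hcYsm i) (hcYint i)
    filter_upwards [h4] with ω hω
    simp only [Pi.smul_apply, Pi.zero_apply, smul_eq_mul]
    rw [hω]
    simp only [Pi.sub_apply, h5]
    simp only [hcYdef]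
    ring
  set M : ℕ → Ω → ℝ := fun n ω => ∑ i ∈ Finset.Icc 1 n, ζ i ω with hMdef
  have hMadp : StronglyAdapted 𝒢 M := by
    intro n
    apply Finset.stronglyMeasurable_fun_sum _
    intro i hi
    exact (hζsmG i).mono (hGmono (Finset.mem_Icc.mp hi).2)
  have hMint : ∀ n, Integrable (M n) μ := fun n =>
    integrable_finset_sum _ (fun i _ => hζint i)
  have hMsucc : ∀ n, M (n+1) = M n + ζ (n+1) := by
    intro n
    funext ω
    simp only [hMdef, Pi.add_apply]
    rw [mw_sum_Icc_one (fun i => ζ i ω) (n+1), Finset.sum_range_succ,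
      ← mw_sum_Icc_one (fun i => ζ i ω) n]
  have hmart : Martingale M 𝒢 μ := by
    apply martingale_nat hMadp hMint
    intro n
    rw [hMsucc n]
    refine ((condExp_add (m := G n) (μ := μ) (hMint n) (hζint (n+1))).trans ?_).symm
    have h1 : condExp (G n) μ (M n) = M n :=
      condExp_of_stronglyMeasurable (hGm0 n) (hMadp n) (hMint n)
    have h2 : condExp (G n) μ (ζ (n+1)) =ᵐ[μ] 0 := by
      have h3 := hcondζ (n+1)
      simpa using h3
    filter_upwards [h2] with ω hω
    simp only [Pi.add_apply, h1, hω, Pi.zero_apply, add_zero]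
  -- products of ζ's are integrable
  have hprodint : ∀ i j, Integrable (fun ω => ζ i ω * ζ j ω) μ := by
    intro i j
    apply Integrable.mono' (integrable_const (4:ℝ)) ((hζm i).mul (hζm j)).aestronglyMeasurable
    filter_upwards [hζbd i, hζbd j] with ω h1 h2
    rw [Real.norm_eq_abs, Pi.mul_apply, abs_mul]
    have h3 := abs_nonneg (ζ i ω)
    have h4 := abs_nonneg (ζ j ω)
    nlinarith
  have horth : ∀ i j, 1 ≤ i → i < j → ∫ ω, ζ i ω * ζ j ω ∂μ = 0 := by
    intro i j hi hij
    have hile : i ≤ j - 1 := by omega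
    have hsm : StronglyMeasurable[G (j-1)] (ζ i) := (hζsmG i).mono (hGmono hile)
    have hpull := condExp_mul_of_stronglyMeasurable_left (m := G (j-1)) (μ := μ) hsm
      (hprodint i j) (hζint j)
    calc ∫ ω, ζ i ω * ζ j ω ∂μ
        = ∫ ω, condExp (G (j-1)) μ (ζ i * ζ j) ω ∂μ :=
          (integral_condExp (hGm0 (j-1))).symm
      _ = 0 := by
          apply integral_eq_zero_of_ae
          filter_upwards [hpull, hcondζ j] with ω hω1 hω2
          rw [hω1]
          simp only [Pi.mul_apply, hω2, Pi.zero_apply, mul_zero]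
  -- variance bound
  have hcYYint : ∀ i, Integrable (fun ω => cY i ω * Y' i ω) μ := by
    intro i
    apply Integrable.mono' (integrable_const ((i:ℝ) * i))
      (((hcYsm i).mono (hGm0 (i-1))).measurable.mul (hY'm i)).aestronglyMeasurable
    filter_upwards [hcYbd i] with ω h1
    rw [Real.norm_eq_abs, Pi.mul_apply, abs_mul]
    exact mul_le_mul h1 (hY'bd i ω) (abs_nonneg _) (Nat.cast_nonneg i)
  have hcYsqint : ∀ i, Integrable (fun ω => cY i ω * cY i ω) μ := by
    intro i
    apply Integrable.mono' (integrable_const ((i:ℝ) * i))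
      (((hcYsm i).mono (hGm0 (i-1))).measurable.mul
        ((hcYsm i).mono (hGm0 (i-1))).measurable).aestronglyMeasurable
    filter_upwards [hcYbd i] with ω h1
    rw [Real.norm_eq_abs, Pi.mul_apply, abs_mul]
    exact mul_le_mul h1 h1 (abs_nonneg _) (Nat.cast_nonneg i)
  have hY'sqint : ∀ i, Integrable (fun ω => Y' i ω * Y' i ω) μ := by
    intro i
    apply Integrable.mono' (integrable_const ((i:ℝ) * i))
      ((hY'm i).mul (hY'm i)).aestronglyMeasurable
    apply Filter.Eventually.of_forall
    intro ω
    rw [Real.norm_eq_abs, Pi.mul_apply, abs_mul]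
    exact mul_le_mul (hY'bd i ω) (hY'bd i ω) (abs_nonneg _) (Nat.cast_nonneg i)
  have hkey : ∀ i, ∫ ω, cY i ω * Y' i ω ∂μ = ∫ ω, cY i ω * cY i ω ∂μ := by
    intro i
    have hpull := condExp_mul_of_stronglyMeasurable_left (m := G (i-1)) (μ := μ) (hcYsm i)
      (hcYYint i) (hY'int i)
    calc ∫ ω, cY i ω * Y' i ω ∂μ
        = ∫ ω, condExp (G (i-1)) μ (cY i * Y' i) ω ∂μ :=
          (integral_condExp (hGm0 (i-1))).symm
      _ = ∫ ω, cY i ω * cY i ω ∂μ := by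
          apply integral_congr_ae
          filter_upwards [hpull] with ω hω
          rw [hω]
          simp only [Pi.mul_apply, hcYdef]
  have hvar : ∀ i, ∫ ω, Z' i ω * Z' i ω ∂μ ≤ ∫ ω, Y' i ω * Y' i ω ∂μ := by
    intro i
    have hexp : ∀ ω, Z' i ω * Z' i ω
        = Y' i ω * Y' i ω - 2 * (cY i ω * Y' i ω) + cY i ω * cY i ω := by
      intro ω
      simp only [hZ'def]
      ring
    have h1 : ∫ ω, Z' i ω * Z' i ω ∂μ
        = (∫ ω, Y' i ω * Y' i ω ∂μ) - 2 * (∫ ω, cY i ω * Y' i ω ∂μ)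
          + ∫ ω, cY i ω * cY i ω ∂μ := by
      rw [integral_congr_ae (Filter.Eventually.of_forall hexp)]
      have hA : Integrable (fun ω => Y' i ω * Y' i ω - 2 * (cY i ω * Y' i ω)) μ :=
        (hY'sqint i).sub ((hcYYint i).const_mul 2)
      have hB : Integrable (fun ω => 2 * (cY i ω * Y' i ω)) μ := (hcYYint i).const_mul 2
      rw [integral_add hA (hcYsqint i), integral_sub (hY'sqint i) hB, integral_const_mul]
    rw [h1, hkey i]
    have h2 : 0 ≤ ∫ ω, cY i ω * cY i ω ∂μ :=
      integral_nonneg fun ω => mul_self_nonneg _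
    linarith
  -- transfer of truncated second moments
  set q : ℕ → ℝ → ℝ := fun i x => if |x| ≤ (i:ℝ)+1 then (|x|+1)^2 else 0 with hqdef
  have hqm : ∀ i, Measurable (q i) := by
    intro i
    exact Measurable.ite (measurableSet_le measurable_abs measurable_const)
      ((measurable_abs.add measurable_const).pow_const 2) measurable_const
  have hqnn : ∀ i x, 0 ≤ q i x := by
    intro i x
    simp only [hqdef]
    split_ifs
    · positivity
    · exact le_refl 0
  have hqbd : ∀ i x, q i x ≤ ((i:ℝ)+2)^2 := by
    intro i x
    simp only [hqdef]
    split_ifs with hc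
    · have h1 := abs_nonneg x
      nlinarith
    · positivity
  have hqint : ∀ i n, Integrable (fun ω => q i (X n ω)) μ := by
    intro i n
    apply Integrable.mono' (integrable_const (((i:ℝ)+2)^2))
      ((hqm i).comp (hXm n)).aestronglyMeasurable
    apply Filter.Eventually.of_forall
    intro ω
    simp only [Function.comp_apply, Real.norm_eq_abs]
    rw [abs_of_nonneg (hqnn i (X n ω))]
    exact hqbd i (X n ω)
  have hqtransfer : ∀ i n, ∫ ω, q i (X n ω) ∂μ = ∫ ω, q i (X 0 ω) ∂μ := by
    intro i n
    rw [← integral_map (hXm n).aemeasurable ((hqm i).aestronglyMeasurable), hid n,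
        integral_map (hXm 0).aemeasurable ((hqm i).aestronglyMeasurable)]
  have hY'sq : ∀ i, ∫ ω, Y' i ω * Y' i ω ∂μ ≤ ∫ ω, q i (X 0 ω) ∂μ := by
    intro i
    rw [← hqtransfer i i]
    apply integral_mono (hY'sqint i) (hqint i i)
    intro ω
    show Y' i ω * Y' i ω ≤ q i (X i ω)
    have hXY : |X i ω| ≤ |Y i ω| + 1 := by
      have h1 := hquant i ω
      have h2 : |X i ω| - |Y i ω| ≤ |X i ω - Y i ω| := abs_sub_abs_le_abs_sub _ _
      rw [abs_sub_comm] at h2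
      simp only [hYdef] at *
      linarith
    by_cases hc : |Y i ω| ≤ (i:ℝ)
    · have hY'eq : Y' i ω = Y i ω := by simp [hY'def, hc]
      have hcond : |X i ω| ≤ (i:ℝ) + 1 := by linarith
      rw [hY'eq]
      simp only [hqdef]
      rw [if_pos hcond]
      have h3 := hYabs i ω
      have h4 := abs_nonneg (Y i ω)
      nlinarith [abs_mul_abs_self (Y i ω)]
    · have hY'eq : Y' i ω = 0 := by simp [hY'def, hc]
      rw [hY'eq, mul_zero]
      exact hqnn i (X i ω)
  -- second moment of M n
  have hMsq : ∀ n, ∫ ω, M n ω * M n ω ∂μ ≤ 32 * ∫ ω, (|X 0 ω| + 1) ∂μ := by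
    intro n
    have hexpand : ∀ ω, M n ω * M n ω
        = ∑ i ∈ Finset.Icc 1 n, ∑ j ∈ Finset.Icc 1 n, ζ i ω * ζ j ω := by
      intro ω
      simp only [hMdef]
      rw [Finset.sum_mul_sum]
    have h1 : ∫ ω, M n ω * M n ω ∂μ
        = ∑ i ∈ Finset.Icc 1 n, ∑ j ∈ Finset.Icc 1 n, ∫ ω, ζ i ω * ζ j ω ∂μ := by
      rw [integral_congr_ae (Filter.Eventually.of_forall hexpand)]
      rw [integral_finset_sum _
        (fun i _ => integrable_finset_sum _ (fun j _ => hprodint i j))]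
      apply Finset.sum_congr rfl
      intro i _
      rw [integral_finset_sum _ (fun j _ => hprodint i j)]
    have h2 : ∀ i ∈ Finset.Icc 1 n,
        (∑ j ∈ Finset.Icc 1 n, ∫ ω, ζ i ω * ζ j ω ∂μ) = ∫ ω, ζ i ω * ζ i ω ∂μ := by
      intro i hi
      apply Finset.sum_eq_single_of_mem i hi
      intro j hj hne
      rcases lt_or_gt_of_ne hne with hlt | hgt
      · have h3 : ∫ ω, ζ j ω * ζ i ω ∂μ = 0 :=
          horth j i (Finset.mem_Icc.mp hj).1 hlt
        rw [← h3]
        apply integral_congr_ae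
        apply Filter.Eventually.of_forall
        intro ω
        ring
      · exact horth i j (Finset.mem_Icc.mp hi).1 hgt
    have h4 : ∀ i, ∫ ω, ζ i ω * ζ i ω ∂μ ≤ ((i:ℝ)^2)⁻¹ * ∫ ω, q i (X 0 ω) ∂μ := by
      intro i
      have h5 : ∀ ω, ζ i ω * ζ i ω = ((i:ℝ)^2)⁻¹ * (Z' i ω * Z' i ω) := by
        intro ω
        simp only [hζdef]
        ring
      have h6 : ∫ ω, ζ i ω * ζ i ω ∂μ = ((i:ℝ)^2)⁻¹ * ∫ ω, Z' i ω * Z' i ω ∂μ := by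
        rw [integral_congr_ae (Filter.Eventually.of_forall h5), integral_const_mul]
      rw [h6]
      apply mul_le_mul_of_nonneg_left _ (by positivity)
      exact (hvar i).trans (hY'sq i)
    calc ∫ ω, M n ω * M n ω ∂μ
        = ∑ i ∈ Finset.Icc 1 n, ∑ j ∈ Finset.Icc 1 n, ∫ ω, ζ i ω * ζ j ω ∂μ := h1
      _ = ∑ i ∈ Finset.Icc 1 n, ∫ ω, ζ i ω * ζ i ω ∂μ := Finset.sum_congr rfl h2
      _ ≤ ∑ i ∈ Finset.Icc 1 n, ((i:ℝ)^2)⁻¹ * ∫ ω, q i (X 0 ω) ∂μ :=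
          Finset.sum_le_sum (fun i _ => h4 i)
      _ = ∫ ω, ∑ i ∈ Finset.Icc 1 n, ((i:ℝ)^2)⁻¹ * q i (X 0 ω) ∂μ := by
          rw [integral_finset_sum _ (fun i _ => (hqint i 0).const_mul _)]
          apply Finset.sum_congr rfl
          intro i _
          rw [integral_const_mul]
      _ ≤ ∫ ω, 32 * (|X 0 ω| + 1) ∂μ := by
          apply integral_mono
            (integrable_finset_sum _ (fun i _ => (hqint i 0).const_mul _))
            (((hXint 0).abs.add (integrable_const 1)).const_mul 32)
          intro ω
          exact mw_sq_bound |X 0 ω| (abs_nonneg _) n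
      _ = 32 * ∫ ω, (|X 0 ω| + 1) ∂μ := integral_const_mul _ _
  -- L¹ boundedness and a.e. convergence of the martingale
  set Cv : ℝ := 32 * ∫ ω, (|X 0 ω| + 1) ∂μ with hCvdef
  have hMMint : ∀ n, Integrable (fun ω => M n ω * M n ω) μ := by
    intro n
    have h1 : Integrable (fun ω => ∑ i ∈ Finset.Icc 1 n, ∑ j ∈ Finset.Icc 1 n,
        ζ i ω * ζ j ω) μ :=
      integrable_finset_sum _ (fun i _ => integrable_finset_sum _ (fun j _ => hprodint i j))
    apply h1.congr
    apply Filter.Eventually.of_forall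
    intro ω
    simp only [hMdef]
    rw [Finset.sum_mul_sum]
  have hMl1 : ∀ n, eLpNorm (M n) 1 μ ≤ ENNReal.ofReal ((1 + Cv)/2) := by
    intro n
    have h2 : ∫ ω, |M n ω| ∂μ ≤ ∫ ω, (1 + M n ω * M n ω)/2 ∂μ := by
      apply integral_mono (hMint n).abs (((integrable_const 1).add (hMMint n)).div_const 2)
      intro ω
      show |M n ω| ≤ (1 + M n ω * M n ω)/2
      nlinarith [sq_nonneg (|M n ω| - 1), abs_mul_abs_self (M n ω)]
    have h3 : ∫ ω, (1 + M n ω * M n ω)/2 ∂μ = (1 + ∫ ω, M n ω * M n ω ∂μ)/2 := by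
      rw [integral_div, integral_add (integrable_const 1) (hMMint n), integral_const]
      simp
    rw [h3] at h2
    have h4 := hMsq n
    calc eLpNorm (M n) 1 μ = ENNReal.ofReal (∫ ω, ‖M n ω‖ ∂μ) := by
          rw [eLpNorm_one_eq_lintegral_enorm, ← ofReal_integral_norm_eq_lintegral_enorm (hMint n)]
      _ ≤ ENNReal.ofReal ((1 + Cv)/2) := by
          apply ENNReal.ofReal_le_ofReal
          simp only [Real.norm_eq_abs]
          rw [hCvdef]
          linarith
  have hconv : ∀ᵐ ω ∂μ, ∃ c, Tendsto (fun n => M n ω) atTop (nhds c) := by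
    have hbdd : ∀ n, eLpNorm (M n) 1 μ ≤ (((1 + Cv)/2).toNNReal : ℝ≥0∞) := fun n => hMl1 n
    filter_upwards [hmart.submartingale.ae_tendsto_limitProcess hbdd] with ω hω
    exact ⟨_, hω⟩
  -- final assembly
  filter_upwards [hconv, haeS] with ω hc hs
  obtain ⟨c, hc⟩ := hc
  have hA : Tendsto (fun n : ℕ => (1/(n:ℝ)) * ∑ i ∈ Finset.Icc 1 n, Z' i ω)
      atTop (nhds 0) := by
    apply mw_kronecker (l := c)
    apply hc.congr
    intro n
    simp only [hMdef]
    apply Finset.sum_congr rfl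
    intro i _
    simp only [hζdef]
    rw [div_eq_inv_mul]
  have hcomp : ∀ (W : ℕ → Ω → ℝ), (∀ j ω', |W (j+1) ω'| ≤ |T (j+1) ω'| + |D (j+1) ω'|) →
      Summable (fun j : ℕ => |W (j+1) ω| / ((j:ℝ)+1)) := by
    intro W hW
    apply Summable.of_nonneg_of_le (fun j => by positivity) _ hs
    intro j
    gcongr
    exact hW j ω
  have hB0 := mw_kronecker_nonneg (b := fun i => |T i ω|)
    (hcomp T (fun j ω' => le_add_of_nonneg_right (abs_nonneg _)))
  have hC0 := mw_kronecker_nonneg (b := fun i => |D i ω|)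
    (hcomp D (fun j ω' => le_add_of_nonneg_left (abs_nonneg _)))
  have habs : ∀ (W : ℕ → Ω → ℝ),
      Tendsto (fun n : ℕ => (1/(n:ℝ)) * ∑ i ∈ Finset.Icc 1 n, |W i ω|) atTop (nhds 0) →
      Tendsto (fun n : ℕ => (1/(n:ℝ)) * ∑ i ∈ Finset.Icc 1 n, W i ω) atTop (nhds 0) := by
    intro W hW
    have hle : ∀ n : ℕ, ‖(1/(n:ℝ)) * ∑ i ∈ Finset.Icc 1 n, W i ω‖
        ≤ (1/(n:ℝ)) * ∑ i ∈ Finset.Icc 1 n, |W i ω| := by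
      intro n
      rw [Real.norm_eq_abs, abs_mul, abs_of_nonneg (show (0:ℝ) ≤ 1/(n:ℝ) by positivity)]
      exact mul_le_mul_of_nonneg_left (Finset.abs_sum_le_sum_abs _ _) (by positivity)
    exact squeeze_zero_norm hle hW
  have hB := habs T hB0
  have hC := habs D hC0
  have heq : ∀ n : ℕ, (1/(n:ℝ)) * ∑ i ∈ Finset.Icc 1 n, Z i ω
      = ((1/(n:ℝ)) * ∑ i ∈ Finset.Icc 1 n, Z' i ω)
        + ((1/(n:ℝ)) * ∑ i ∈ Finset.Icc 1 n, T i ω)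
        - ((1/(n:ℝ)) * ∑ i ∈ Finset.Icc 1 n, D i ω) := by
    intro n
    have h1 : ∑ i ∈ Finset.Icc 1 n, Z i ω
        = ∑ i ∈ Finset.Icc 1 n, (Z' i ω + T i ω - D i ω) :=
      Finset.sum_congr rfl (fun i hi => hdecomp i (Finset.mem_Icc.mp hi).1 ω)
    rw [h1, Finset.sum_sub_distrib, Finset.sum_add_distrib]
    ring
  have hfinal := (hA.add hB).sub hC
  rw [show ((0:ℝ) + 0 - 0) = 0 by ring] at hfinal
  apply hfinal.congr
  intro n
  exact (heq n).symm
end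

section
/- For any sequence of real numbers {a_i}_{i≥1}, sup_{n≥1} (1/n) | Σ_{i=1}^{n} a_i | ≤ 2 · sup_{n≥1} | Σ_{i=1}^{n} a_i / i |, where both suprema are taken in [0, ∞]. -/
open MeasureTheory Filter Finset
open scoped ENNReal

lemma abel_id_aux (a : ℕ → ℝ) (n : ℕ) :
    ∑ i ∈ Finset.Icc 1 (n + 1), a i
      = ((n : ℝ) + 1) * (∑ i ∈ Finset.Icc 1 (n + 1), a i / i)
        - ∑ k ∈ Finset.Icc 1 n, (∑ i ∈ Finset.Icc 1 k, a i / (i : ℝ)) := by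
  induction n with
  | zero => simp
  | succ n ih =>
    rw [Finset.sum_Icc_succ_top (by omega : 1 ≤ n + 2) a,
        Finset.sum_Icc_succ_top (by omega : 1 ≤ n + 2) (fun i => a i / (i : ℝ)),
        Finset.sum_Icc_succ_top (by omega : 1 ≤ n + 1)
          (fun k => ∑ i ∈ Finset.Icc 1 k, a i / (i : ℝ)), ih]
    have h : ((n : ℝ) + 2) ≠ 0 := by positivity
    push_cast
    field_simp
    ring

/-- **Elton's Lemma 7**: for any sequence of reals `{a_i}`,
`sup_{n ≥ 1} (1/n) |∑_{i=1}^n a_i| ≤ 2 · sup_{n ≥ 1} |∑_{i=1}^n a_i / i|`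
(in the extended reals `[0, ∞]`). -/
theorem sup_avg_le_two_mul_sup_weighted (a : ℕ → ℝ) :
    (⨆ n : ℕ, ENNReal.ofReal
        ((1 / ((n : ℝ) + 1)) * |∑ i ∈ Finset.Icc 1 (n + 1), a i|)) ≤
      2 * ⨆ n : ℕ, ENNReal.ofReal |∑ i ∈ Finset.Icc 1 (n + 1), a i / (i : ℝ)| := by
  set B := ⨆ n : ℕ, ENNReal.ofReal |∑ i ∈ Finset.Icc 1 (n + 1), a i / (i : ℝ)| with hB
  by_cases hBtop : B = ⊤
  · rw [hBtop]; simp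
  · set M := B.toReal with hM
    have hM0 : 0 ≤ M := ENNReal.toReal_nonneg
    have hTle : ∀ k : ℕ, |∑ i ∈ Finset.Icc 1 (k + 1), a i / (i : ℝ)| ≤ M := by
      intro k
      have h1 : ENNReal.ofReal |∑ i ∈ Finset.Icc 1 (k + 1), a i / (i : ℝ)| ≤ B :=
        le_iSup (fun n => ENNReal.ofReal |∑ i ∈ Finset.Icc 1 (n + 1), a i / (i : ℝ)|) k
      have h2 := (ENNReal.toReal_le_toReal ENNReal.ofReal_ne_top hBtop).mpr h1
      rwa [ENNReal.toReal_ofReal (abs_nonneg _)] at h2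
    refine iSup_le fun n => ?_
    have hS : |∑ i ∈ Finset.Icc 1 (n + 1), a i| ≤ 2 * ((n : ℝ) + 1) * M := by
      rw [abel_id_aux a n]
      have h1 : |((n : ℝ) + 1) * (∑ i ∈ Finset.Icc 1 (n + 1), a i / (i : ℝ))|
          ≤ ((n : ℝ) + 1) * M := by
        rw [abs_mul, abs_of_nonneg (by positivity : (0:ℝ) ≤ (n : ℝ) + 1)]
        exact mul_le_mul_of_nonneg_left (hTle n) (by positivity)
      have h2 : |∑ k ∈ Finset.Icc 1 n, (∑ i ∈ Finset.Icc 1 k, a i / (i : ℝ))|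
          ≤ (n : ℝ) * M := by
        calc |∑ k ∈ Finset.Icc 1 n, (∑ i ∈ Finset.Icc 1 k, a i / (i : ℝ))|
            ≤ ∑ k ∈ Finset.Icc 1 n, |∑ i ∈ Finset.Icc 1 k, a i / (i : ℝ)| :=
              Finset.abs_sum_le_sum_abs _ _
          _ ≤ ∑ _k ∈ Finset.Icc 1 n, M := by
              refine Finset.sum_le_sum fun k hk => ?_
              have hk1 : 1 ≤ k := (Finset.mem_Icc.mp hk).1
              have := hTle (k - 1)
              rwa [Nat.sub_add_cancel hk1] at this
          _ = (n : ℝ) * M := by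
              rw [Finset.sum_const, Nat.card_Icc]
              simp [nsmul_eq_mul]
      calc |((n : ℝ) + 1) * (∑ i ∈ Finset.Icc 1 (n + 1), a i / (i : ℝ))
            - ∑ k ∈ Finset.Icc 1 n, (∑ i ∈ Finset.Icc 1 k, a i / (i : ℝ))|
          ≤ |((n : ℝ) + 1) * (∑ i ∈ Finset.Icc 1 (n + 1), a i / (i : ℝ))|
            + |∑ k ∈ Finset.Icc 1 n, (∑ i ∈ Finset.Icc 1 k, a i / (i : ℝ))| :=
            abs_sub _ _
        _ ≤ ((n : ℝ) + 1) * M + (n : ℝ) * M := add_le_add h1 h2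
        _ ≤ 2 * ((n : ℝ) + 1) * M := by nlinarith [Nat.cast_nonneg (α := ℝ) n]
    have hreal : (1 / ((n : ℝ) + 1)) * |∑ i ∈ Finset.Icc 1 (n + 1), a i| ≤ 2 * M := by
      have hn : (0:ℝ) < (n : ℝ) + 1 := by positivity
      rw [div_mul_eq_mul_div, one_mul, div_le_iff₀ hn]
      linarith [hS]
    calc ENNReal.ofReal ((1 / ((n : ℝ) + 1)) * |∑ i ∈ Finset.Icc 1 (n + 1), a i|)
        ≤ ENNReal.ofReal (2 * M) := ENNReal.ofReal_le_ofReal hreal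
      _ = 2 * ENNReal.ofReal M := by
          rw [ENNReal.ofReal_mul (by norm_num)]
          norm_num
      _ = 2 * B := by rw [hM, ENNReal.ofReal_toReal hBtop]
end

section
/- Let {X_n}_{n≥1} be identically distributed real random variables with E(|X_1| log⁺|X_1|) < ∞. Then Σ_{n=1}^{∞} (1/n) E( (1 + |X_n|) · 1{|X_n| > n − 1} ) < ∞. -/
open MeasureTheory Filter Finset
open scoped ENNReal

private lemma harmonic_sum_le (N : ℕ) :
    ∑ i ∈ Finset.range N, (1 : ℝ) / ((i : ℝ) + 1) ≤ 1 + Real.log N := by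
  have h := harmonic_le_one_add_log N
  have he : ((harmonic N : ℚ) : ℝ) = ∑ i ∈ Finset.range N, (1 : ℝ) / ((i : ℝ) + 1) := by
    rw [harmonic]
    push_cast
    simp [one_div]
  linarith [he ▸ h]

private lemma log_succ_le (y : ℝ) (hy : 0 ≤ y) :
    Real.log (y + 1) ≤ 1 + max (Real.log y) 0 := by
  have hlog2 : Real.log 2 ≤ 1 := by
    have := Real.log_two_lt_d9
    linarith
  rcases le_or_gt y 1 with h | h
  · have : Real.log (y + 1) ≤ Real.log 2 := by
      apply Real.log_le_log (by linarith) (by linarith)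
    have h0 : (0:ℝ) ≤ max (Real.log y) 0 := le_max_right _ _
    linarith
  · have : Real.log (y + 1) ≤ Real.log (2 * y) :=
      Real.log_le_log (by linarith) (by linarith)
    rw [Real.log_mul (by norm_num) (by linarith)] at this
    have hly : Real.log y ≤ max (Real.log y) 0 := le_max_left _ _
    linarith

private lemma tsum_pointwise_bound (y : ℝ) (hy : 0 ≤ y) :
    ∑' n : ℕ, ENNReal.ofReal (1 / ((n : ℝ) + 1)) *
        ENNReal.ofReal (if (n : ℝ) < y then 1 + y else 0)
      ≤ ENNReal.ofReal ((1 + y) * (2 + max (Real.log y) 0)) := by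
  set N := ⌈y⌉₊ with hN
  have hzero : ∀ n ∉ Finset.range N, ENNReal.ofReal (1 / ((n : ℝ) + 1)) *
      ENNReal.ofReal (if (n : ℝ) < y then 1 + y else 0) = 0 := by
    intro n hn
    rw [Finset.mem_range, not_lt] at hn
    have : ¬ ((n : ℝ) < y) := not_lt.mpr ((Nat.ceil_le.mp hn))
    rw [if_neg this, ENNReal.ofReal_zero, mul_zero]
  rw [tsum_eq_sum hzero]
  have hsum : ∑ n ∈ Finset.range N, ENNReal.ofReal (1 / ((n : ℝ) + 1)) *
      ENNReal.ofReal (if (n : ℝ) < y then 1 + y else 0)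
      = ENNReal.ofReal (∑ n ∈ Finset.range N, (1 / ((n : ℝ) + 1)) * (1 + y)) := by
    rw [ENNReal.ofReal_sum_of_nonneg]
    · refine Finset.sum_congr rfl fun n hn => ?_
      rw [Finset.mem_range] at hn
      rw [if_pos (Nat.lt_ceil.mp hn), ENNReal.ofReal_mul (by positivity)]
    · intro n _
      positivity
  rw [hsum]
  apply ENNReal.ofReal_le_ofReal
  rw [← Finset.sum_mul]
  have h1 : ∑ n ∈ Finset.range N, (1 : ℝ) / ((n : ℝ) + 1) ≤ 2 + max (Real.log y) 0 := by
    have h2 := harmonic_sum_le N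
    have h3 : Real.log N ≤ Real.log (y + 1) := by
      rcases Nat.eq_zero_or_pos N with h | h
      · simp only [h, Nat.cast_zero, Real.log_zero]
        exact Real.log_nonneg (by linarith)
      · exact Real.log_le_log (by exact_mod_cast h) (le_of_lt (Nat.ceil_lt_add_one hy))
    have h4 := log_succ_le y hy
    linarith
  have hsnn : (0:ℝ) ≤ ∑ n ∈ Finset.range N, (1 : ℝ) / ((n : ℝ) + 1) := by positivity
  calc (∑ n ∈ Finset.range N, (1 : ℝ) / ((n : ℝ) + 1)) * (1 + y)
      ≤ (2 + max (Real.log y) 0) * (1 + y) := by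
        apply mul_le_mul_of_nonneg_right h1 (by linarith)
    _ = (1 + y) * (2 + max (Real.log y) 0) := by ring

private lemma real_bound (y : ℝ) (hy : 0 ≤ y) :
    (1 + y) * (2 + max (Real.log y) 0)
      ≤ (2 + 3 * Real.exp 1) + 4 * (y * max (Real.log y) 0) := by
  set L := max (Real.log y) 0 with hL
  have hL0 : 0 ≤ L := le_max_right _ _
  have hLy : L ≤ y := by
    rcases le_or_gt y 0 with h | h
    · have : y = 0 := le_antisymm h hy
      simp [hL, this]
    · have := Real.log_le_sub_one_of_pos h
      apply max_le (by linarith) hy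
  have hye : y ≤ Real.exp 1 + y * L := by
    rcases le_or_gt y (Real.exp 1) with h | h
    · nlinarith
    · have h1 : (1:ℝ) ≤ Real.log y := by
        rw [← Real.log_exp 1]
        exact Real.log_le_log (Real.exp_pos 1) h.le
      have h2 : (1:ℝ) ≤ L := le_trans h1 (le_max_left _ _)
      have h3 : y * 1 ≤ y * L := mul_le_mul_of_nonneg_left h2 hy
      have := Real.exp_pos 1
      linarith
  nlinarith

/-- **Elton's Lemma 2**: if `{X_n}_{n ≥ 1}` are identically distributed with
`E(|X_1| log⁺ |X_1|) < ∞`, then `∑_{n=1}^∞ (1/n) E((1 + |X_n|) · 1{|X_n| > n − 1}) < ∞`. -/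
theorem sum_tail_expectations_lt_top {Ω : Type*} [MeasurableSpace Ω] (μ : Measure Ω)
    [IsProbabilityMeasure μ] (X : ℕ → Ω → ℝ)
    (hmeas : ∀ n, 1 ≤ n → Measurable (X n))
    (hid : ∀ n, 1 ≤ n → μ.map (X n) = μ.map (X 1))
    (hLlogL : Integrable (fun ω => |X 1 ω| * max (Real.log |X 1 ω|) 0) μ) :
    ∑' n : ℕ, ENNReal.ofReal (1 / ((n : ℝ) + 1)) *
        ∫⁻ ω, ENNReal.ofReal
          (if (n : ℝ) < |X (n + 1) ω| then 1 + |X (n + 1) ω| else 0) ∂μ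
      < ⊤ := by
  have hY : Measurable (X 1) := hmeas 1 le_rfl
  have hgmeas : ∀ n : ℕ, Measurable (fun x : ℝ =>
      ENNReal.ofReal (if (n : ℝ) < |x| then 1 + |x| else 0)) := by
    intro n
    apply Measurable.ennreal_ofReal
    exact Measurable.ite (measurableSet_lt measurable_const measurable_abs)
      (measurable_const.add measurable_abs) measurable_const
  have hstep : ∀ n : ℕ,
      (∫⁻ ω, ENNReal.ofReal (if (n : ℝ) < |X (n + 1) ω| then 1 + |X (n + 1) ω| else 0) ∂μ)
      = ∫⁻ ω, ENNReal.ofReal (if (n : ℝ) < |X 1 ω| then 1 + |X 1 ω| else 0) ∂μ := by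
    intro n
    rw [← lintegral_map (hgmeas n) (hmeas (n + 1) (by omega)), hid (n + 1) (by omega),
      lintegral_map (hgmeas n) hY]
  simp_rw [hstep]
  have hswap : ∑' n : ℕ, ENNReal.ofReal (1 / ((n : ℝ) + 1)) *
        ∫⁻ ω, ENNReal.ofReal (if (n : ℝ) < |X 1 ω| then 1 + |X 1 ω| else 0) ∂μ
      = ∫⁻ ω, ∑' n : ℕ, ENNReal.ofReal (1 / ((n : ℝ) + 1)) *
        ENNReal.ofReal (if (n : ℝ) < |X 1 ω| then 1 + |X 1 ω| else 0) ∂μ := by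
    have hm : ∀ n : ℕ, Measurable fun ω =>
        ENNReal.ofReal (if (n : ℝ) < |X 1 ω| then 1 + |X 1 ω| else 0) :=
      fun n => (hgmeas n).comp hY
    rw [lintegral_tsum (fun n => ((hm n).const_mul _).aemeasurable)]
    exact tsum_congr fun n => (lintegral_const_mul _ (hm n)).symm
  rw [hswap]
  have hbound : ∫⁻ ω, ∑' n : ℕ, ENNReal.ofReal (1 / ((n : ℝ) + 1)) *
        ENNReal.ofReal (if (n : ℝ) < |X 1 ω| then 1 + |X 1 ω| else 0) ∂μ
      ≤ ∫⁻ ω, (ENNReal.ofReal (2 + 3 * Real.exp 1)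
          + 4 * ENNReal.ofReal (|X 1 ω| * max (Real.log |X 1 ω|) 0)) ∂μ := by
    apply lintegral_mono
    intro ω
    calc ∑' n : ℕ, ENNReal.ofReal (1 / ((n : ℝ) + 1)) *
          ENNReal.ofReal (if (n : ℝ) < |X 1 ω| then 1 + |X 1 ω| else 0)
        ≤ ENNReal.ofReal ((1 + |X 1 ω|) * (2 + max (Real.log |X 1 ω|) 0)) :=
          tsum_pointwise_bound _ (abs_nonneg _)
      _ ≤ ENNReal.ofReal ((2 + 3 * Real.exp 1) + 4 * (|X 1 ω| * max (Real.log |X 1 ω|) 0)) :=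
          ENNReal.ofReal_le_ofReal (real_bound _ (abs_nonneg _))
      _ ≤ ENNReal.ofReal (2 + 3 * Real.exp 1)
          + ENNReal.ofReal (4 * (|X 1 ω| * max (Real.log |X 1 ω|) 0)) :=
          ENNReal.ofReal_add_le
      _ = ENNReal.ofReal (2 + 3 * Real.exp 1)
          + 4 * ENNReal.ofReal (|X 1 ω| * max (Real.log |X 1 ω|) 0) := by
          rw [ENNReal.ofReal_mul (by norm_num)]
          norm_num
  refine lt_of_le_of_lt hbound ?_
  rw [lintegral_add_left measurable_const, lintegral_const, lintegral_const_mul]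
  · have hfin : ∫⁻ ω, ENNReal.ofReal (|X 1 ω| * max (Real.log |X 1 ω|) 0) ∂μ < ⊤ := by
      refine lt_of_le_of_lt (lintegral_ofReal_le_lintegral_enorm _) ?_
      exact hLlogL.2
    have h1 : ENNReal.ofReal (2 + 3 * Real.exp 1) * μ Set.univ < ⊤ := by
      rw [measure_univ, mul_one]
      exact ENNReal.ofReal_lt_top
    exact ENNReal.add_lt_top.mpr ⟨h1, ENNReal.mul_lt_top (by norm_num) hfin⟩
  · exact Measurable.ennreal_ofReal ((hY.abs).mul ((Real.measurable_log.comp hY.abs).max measurable_const))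
end
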